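/- The number of elements of order 2 in the projective special linear group PSL(3,4) is 315. -/

import Mathlib

/-- PSL(3,4): the projective special linear group of degree 3 over the field with 4 elements. -/
def PSL34 : Type :=
  Matrix.SpecialLinearGroup (Fin 3) (GaloisField 2 2) ⧸
    Subgroup.center (Matrix.SpecialLinearGroup (Fin 3) (GaloisField 2 2))

noncomputable instance : Group PSL34 :=
  inferInstanceAs (Group (Matrix.SpecialLinearGroup (Fin 3) (GaloisField 2 2) ⧸
    Subgroup.center (Matrix.SpecialLinearGroup (Fin 3) (GaloisField 2 2))))

inductive F4 : Type | O | I | a | b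
deriving DecidableEq
instance : Fintype F4 := ⟨⟨↑[F4.O, F4.I, F4.a, F4.b], by decide⟩, fun x => by cases x <;> decide⟩
namespace F4
def add : F4 → F4 → F4
  | O, x => x | x, O => x
  | I, I => O | I, a => b | I, b => a
  | a, I => b | a, a => O | a, b => I
  | b, I => a | b, a => I | b, b => O
def mul : F4 → F4 → F4
  | O, _ => O | _, O => O
  | I, x => x | x, I => x
  | a, a => b | a, b => I
  | b, a => I | b, b => a
def inv' : F4 → F4 | O => O | I => I | a => b | b => a
instance : Zero F4 := ⟨O⟩
instance : One F4 := ⟨I⟩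
instance : Add F4 := ⟨add⟩
instance : Mul F4 := ⟨mul⟩
instance : Neg F4 := ⟨id⟩
instance : Inv F4 := ⟨inv'⟩
instance : CommRing F4 where
  add_assoc := by decide
  zero_add := by decide
  add_zero := by decide
  nsmul := nsmulRec
  add_comm := by decide
  mul_assoc := by decide
  one_mul := by decide
  mul_one := by decide
  left_distrib := by decide
  right_distrib := by decide
  zero_mul := by decide
  mul_zero := by decide
  neg_add_cancel := by decide
  zsmul := zsmulRec
  mul_comm := by decide
instance : Field F4 where
  exists_pair_ne := ⟨O, I, by decide⟩
  mul_inv_cancel := by decide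
  inv_zero := by decide
  nnqsmul := _
  qsmul := _
end F4

section PartA
variable {G : Type*} [Group G]

lemma card_invol_quotient_center (h3 : ∀ z ∈ Subgroup.center G, z ^ 3 = 1) :
    Nat.card {x : G ⧸ Subgroup.center G // orderOf x = 2} =
      Nat.card {x : G // orderOf x = 2} := by
  have : Fact (Nat.Prime 2) := ⟨Nat.prime_two⟩
  have key : ∀ x : G, orderOf x = 2 → orderOf ((x : G ⧸ Subgroup.center G)) = 2 := by
    intro x hx
    refine orderOf_eq_prime ?_ ?_
    · rw [← QuotientGroup.mk_pow, ← hx, pow_orderOf_eq_one x]; rfl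
    · intro h
      rw [QuotientGroup.eq_one_iff] at h
      have h2 : x ^ 2 = 1 := by rw [← hx]; exact pow_orderOf_eq_one x
      have h1 : x = 1 := by
        have := h3 x h
        calc x = x ^ 3 * (x ^ 2)⁻¹ := by group
        _ = 1 := by rw [this, h2]; group
      rw [h1] at hx; simp at hx
  refine (Nat.card_eq_of_bijective
    (fun x : {x : G // orderOf x = 2} => ⟨(x.1 : G ⧸ Subgroup.center G), key x.1 x.2⟩)
    ⟨?_, ?_⟩).symm
  · -- injective
    rintro ⟨x, hx⟩ ⟨y, hy⟩ hxy
    simp only [Subtype.mk.injEq, QuotientGroup.eq] at hxy ⊢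
    set z := x⁻¹ * y with hz
    have hzc := hxy
    rw [Subgroup.mem_center_iff] at hzc
    have hy' : y = x * z := by rw [hz]; group
    have hx2 : x ^ 2 = 1 := by rw [← hx]; exact pow_orderOf_eq_one x
    have hy2 : y ^ 2 = 1 := by rw [← hy]; exact pow_orderOf_eq_one y
    have hz2 : z ^ 2 = 1 := by
      have comm : x * z = z * x := hzc x
      have : y ^ 2 = x ^ 2 * z ^ 2 := by
        calc y ^ 2 = x * (z * x) * z := by rw [hy']; simp [pow_two, mul_assoc]
        _ = x * (x * z) * z := by rw [comm]
        _ = x ^ 2 * z ^ 2 := by simp [pow_two, mul_assoc]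
      rw [hy2, hx2, one_mul] at this
      exact this.symm
    have hz3 := h3 z hxy
    have : z = 1 := by
      calc z = z ^ 3 * (z ^ 2)⁻¹ := by group
      _ = 1 := by rw [hz3, hz2]; group
    rw [hy', this, mul_one]
  · -- surjective
    rintro ⟨q, hq⟩
    obtain ⟨x, rfl⟩ : ∃ x : G, (x : G ⧸ Subgroup.center G) = q := ⟨q.out, q.out_eq'⟩
    have hq2 : ((x ^ 2 : G) : G ⧸ Subgroup.center G) = 1 := by
      rw [QuotientGroup.mk_pow, ← hq]; exact pow_orderOf_eq_one _
    have hxc : x ^ 2 ∈ Subgroup.center G := (QuotientGroup.eq_one_iff _).mp hq2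
    have hmk : ((x ^ 3 : G) : G ⧸ Subgroup.center G) = (x : G ⧸ Subgroup.center G) := by
      have hxx : (x : G)^3 = x * x ^ 2 := by group
      rw [hxx, QuotientGroup.mk_mul, (QuotientGroup.eq_one_iff _).mpr hxc, mul_one]
    refine ⟨⟨x ^ 3, orderOf_eq_prime ?_ ?_⟩, ?_⟩
    · show (x ^ 3) ^ 2 = 1
      have := h3 _ hxc
      calc (x ^ 3) ^ 2 = (x ^ 2) ^ 3 := by group
      _ = 1 := this
    · intro h
      rw [h, QuotientGroup.mk_one] at hmk
      rw [← hmk] at hq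
      simp [orderOf_one] at hq
    · exact Subtype.ext hmk
end PartA

open Matrix in
lemma minors (N : Matrix (Fin 3) (Fin 3) F4) (h : N * N = 0) (i j k l : Fin 3) :
    N i j * N k l = N i l * N k j := by
  classical
  set f := N.mulVecLin with hf
  have hrk : LinearMap.range f ≤ LinearMap.ker f := by
    rintro v ⟨u, rfl⟩
    simp only [LinearMap.mem_ker, hf, Matrix.mulVecLin_apply, Matrix.mulVec_mulVec, h,
      Matrix.zero_mulVec]
  have hfin : Module.finrank F4 (LinearMap.range f) ≤ 1 := by
    have h1 := LinearMap.finrank_range_add_finrank_ker f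
    rw [Module.finrank_fin_fun] at h1
    have h2 : Module.finrank F4 (LinearMap.range f) ≤ Module.finrank F4 (LinearMap.ker f) :=
      Submodule.finrank_mono hrk
    omega
  -- columns j and l are in range f
  have hcol : ∀ m : Fin 3, (fun i => N i m) ∈ LinearMap.range f := by
    intro m
    exact ⟨Pi.single m 1, by simp [hf]; rfl⟩
  set u : Fin 3 → F4 := fun i => N i j with hu
  set v : Fin 3 → F4 := fun i => N i l with hv
  have hdep : ¬ LinearIndependent F4 ![u, v] := by
    intro hind
    have hind' : LinearIndependent F4 (fun t : Fin 2 =>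
        (![(⟨u, hcol j⟩ : LinearMap.range f), ⟨v, hcol l⟩] t : Fin 3 → F4)) := by
      convert hind using 1
      funext t
      fin_cases t <;> rfl
    have hind2 := hind'.of_comp (LinearMap.range f).subtype
    have := hind2.fintype_card_le_finrank
    simp at this
    omega
  rw [LinearIndependent.pair_iff] at hdep
  push_neg at hdep
  obtain ⟨s, t, hst, hne⟩ := hdep
  have hcoord : ∀ m : Fin 3, s * N m j + t * N m l = 0 := by
    intro m
    have := congrFun hst m
    simpa [hu, hv] using this
  by_cases ht : t = 0
  · have hs : s ≠ 0 := by
      intro h'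
      exact hne h' ht
    -- s * N m j = 0 for all m, so N m j = 0
    have hz : ∀ m, N m j = 0 := by
      intro m
      have := hcoord m
      rw [ht, zero_mul, add_zero] at this
      exact (mul_eq_zero.mp this).resolve_left hs
    rw [hz i, hz k, zero_mul, mul_zero]
  · -- N m l = (t⁻¹ * s) * N m j
    have hrel : ∀ m, N m l = t⁻¹ * s * N m j := by
      intro m
      have h0 := hcoord m
      have hneg : ∀ x y : F4, x + y = 0 → y = x := by decide
      have h1 : t * N m l = s * N m j := hneg _ _ h0
      calc N m l = t⁻¹ * (t * N m l) := by rw [← mul_assoc, inv_mul_cancel₀ ht, one_mul]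
      _ = t⁻¹ * (s * N m j) := by rw [h1]
      _ = t⁻¹ * s * N m j := by ring
    rw [hrel i, hrel k]; ring

abbrev MatF4 := Matrix (Fin 3) (Fin 3) F4
abbrev VF4 := Fin 3 → F4

noncomputable def pos (N : MatF4) : Fin 3 × Fin 3 :=
  if h : ∃ p : Fin 3 × Fin 3, N p.1 p.2 ≠ 0 then h.choose else (0, 0)

lemma pos_spec {N : MatF4} (hN : N ≠ 0) : N (pos N).1 (pos N).2 ≠ 0 := by
  have h : ∃ p : Fin 3 × Fin 3, N p.1 p.2 ≠ 0 := by
    by_contra hc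
    push_neg at hc
    exact hN (by ext i j; exact hc (i, j))
  rw [pos, dif_pos h]
  exact h.choose_spec

noncomputable def E2 : F4ˣ × {N : MatF4 // N * N = 0 ∧ N ≠ 0} ≃
    {p : VF4 × VF4 // p.1 ≠ 0 ∧ p.2 ≠ 0 ∧ dotProduct p.2 p.1 = 0} := by
  classical
  -- decomposition lemma
  have decomp : ∀ (N : MatF4), N * N = 0 → N ≠ 0 →
      ∀ i j, (N i (pos N).2 * (N (pos N).1 (pos N).2)⁻¹) * N (pos N).1 j = N i j := by
    intro N h2 h0 i j
    have hd := pos_spec h0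
    have hm := minors N h2 i (pos N).2 (pos N).1 j
    field_simp
    linear_combination hm
  refine Equiv.mk
    (fun x => ⟨(fun i => (x.1 : F4) * (x.2.1 i (pos x.2.1).2 * (x.2.1 (pos x.2.1).1 (pos x.2.1).2)⁻¹),
               fun j => ((x.1⁻¹ : F4ˣ) : F4) * x.2.1 (pos x.2.1).1 j), ?_, ?_, ?_⟩)
    (fun p => (Units.mk0 (p.1.1 (pos (Matrix.vecMulVec p.1.1 p.1.2)).1) ?_,
               ⟨Matrix.vecMulVec p.1.1 p.1.2, ?_, ?_⟩))
    ?_ ?_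
  case refine_1 =>
    -- c' ≠ 0 : value at i₀ is u * (d * d⁻¹) = u ≠ 0
    obtain ⟨u, N, h2, h0⟩ := x
    intro hc
    have hd := pos_spec h0
    have := congrFun hc (pos N).1
    simp only [Pi.zero_apply] at this
    rw [mul_inv_cancel₀ hd, mul_one] at this
    exact u.ne_zero this
  case refine_2 =>
    obtain ⟨u, N, h2, h0⟩ := x
    intro hw
    have hd := pos_spec h0
    have := congrFun hw (pos N).2
    simp only [Pi.zero_apply] at this
    rcases mul_eq_zero.mp this with h | h
    · exact Units.ne_zero _ h
    · exact hd h
  case refine_3 =>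
    obtain ⟨u, N, h2, h0⟩ := x
    show (Finset.univ.sum fun j => _) = 0
    have hd := pos_spec h0
    have hstep : ∀ j : Fin 3,
        (((u⁻¹ : F4ˣ) : F4) * N (pos N).1 j) *
          ((u : F4) * (N j (pos N).2 * (N (pos N).1 (pos N).2)⁻¹)) =
        (N (pos N).1 j * N j (pos N).2) * (N (pos N).1 (pos N).2)⁻¹ := by
      intro j
      have hu : ((u⁻¹ : F4ˣ) : F4) * (u : F4) = 1 := by
        rw [← Units.val_mul, inv_mul_cancel, Units.val_one]
      calc (((u⁻¹ : F4ˣ) : F4) * N (pos N).1 j) *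
          ((u : F4) * (N j (pos N).2 * (N (pos N).1 (pos N).2)⁻¹))
          = (((u⁻¹ : F4ˣ) : F4) * (u : F4)) *
            ((N (pos N).1 j * N j (pos N).2) * (N (pos N).1 (pos N).2)⁻¹) := by ring
      _ = _ := by rw [hu, one_mul]
    calc (Finset.univ.sum fun j => (((u⁻¹ : F4ˣ) : F4) * N (pos N).1 j) *
          ((u : F4) * (N j (pos N).2 * (N (pos N).1 (pos N).2)⁻¹)))
        = Finset.univ.sum fun j => (N (pos N).1 j * N j (pos N).2) * (N (pos N).1 (pos N).2)⁻¹ :=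
          Finset.sum_congr rfl (fun j _ => hstep j)
    _ = (Finset.univ.sum fun j => N (pos N).1 j * N j (pos N).2) * (N (pos N).1 (pos N).2)⁻¹ := by
          rw [Finset.sum_mul]
    _ = (N * N) (pos N).1 (pos N).2 * (N (pos N).1 (pos N).2)⁻¹ := rfl
    _ = 0 := by rw [h2]; simp
  case refine_4 =>
    -- c (pos N).1 ≠ 0 where N = vecMulVec c w
    obtain ⟨⟨c, w⟩, hc, hw, hdot⟩ := p
    have hN0 : Matrix.vecMulVec c w ≠ 0 := by
      obtain ⟨i, hi⟩ := Function.ne_iff.mp hc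
      obtain ⟨j, hj⟩ := Function.ne_iff.mp hw
      intro hz
      have := congrFun (congrFun hz i) j
      rw [Matrix.vecMulVec_apply] at this
      exact (mul_ne_zero hi hj) this
    have := pos_spec hN0
    rw [Matrix.vecMulVec_apply] at this
    show c (pos (Matrix.vecMulVec c w)).1 ≠ 0
    exact fun h => this (by rw [h, zero_mul])
  case refine_5 =>
    obtain ⟨⟨c, w⟩, hc, hw, hdot⟩ := p
    ext i j
    show (Finset.univ.sum fun m => (c i * w m) * (c m * w j)) = 0
    calc (Finset.univ.sum fun m => (c i * w m) * (c m * w j))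
        = Finset.univ.sum fun m => (c i * w j) * (w m * c m) :=
          Finset.sum_congr rfl (fun m _ => by ring)
    _ = (c i * w j) * Finset.univ.sum fun m => w m * c m := by rw [Finset.mul_sum]
    _ = 0 := by rw [show (Finset.univ.sum fun m => w m * c m) = dotProduct w c from rfl,
          hdot, mul_zero]
  case refine_6 =>
    obtain ⟨⟨c, w⟩, hc, hw, hdot⟩ := p
    obtain ⟨i, hi⟩ := Function.ne_iff.mp hc
    obtain ⟨j, hj⟩ := Function.ne_iff.mp hw
    intro hz
    have := congrFun (congrFun hz i) j
    rw [Matrix.vecMulVec_apply] at this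
    exact (mul_ne_zero hi hj) this
  case refine_7 =>
    -- left inverse
    rintro ⟨u, N, h2, h0⟩
    have hd := pos_spec h0
    have hNN : Matrix.vecMulVec
        (fun i => (u : F4) * (N i (pos N).2 * (N (pos N).1 (pos N).2)⁻¹))
        (fun j => ((u⁻¹ : F4ˣ) : F4) * N (pos N).1 j) = N := by
      ext i j
      rw [Matrix.vecMulVec_apply]
      have hu : (u : F4) * ((u⁻¹ : F4ˣ) : F4) = 1 := by
        rw [← Units.val_mul, mul_inv_cancel, Units.val_one]
      calc (u : F4) * (N i (pos N).2 * (N (pos N).1 (pos N).2)⁻¹) *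
            (((u⁻¹ : F4ˣ) : F4) * N (pos N).1 j)
          = ((u : F4) * ((u⁻¹ : F4ˣ) : F4)) *
            ((N i (pos N).2 * (N (pos N).1 (pos N).2)⁻¹) * N (pos N).1 j) := by ring
      _ = (N i (pos N).2 * (N (pos N).1 (pos N).2)⁻¹) * N (pos N).1 j := by rw [hu, one_mul]
      _ = N i j := decomp N h2 h0 i j
    refine Prod.ext ?_ (Subtype.ext ?_)
    · -- units component
      apply Units.ext
      show (fun i => (u : F4) * (N i (pos N).2 * (N (pos N).1 (pos N).2)⁻¹))
          (pos (Matrix.vecMulVec _ _)).1 = (u : F4)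
      rw [hNN]
      simp only
      rw [mul_inv_cancel₀ hd, mul_one]
    · exact hNN
  case refine_8 =>
    rintro ⟨⟨c, w⟩, hc, hw, hdot⟩
    set N := Matrix.vecMulVec c w with hN
    have hN0 : N ≠ 0 := by
      obtain ⟨i, hi⟩ := Function.ne_iff.mp hc
      obtain ⟨j, hj⟩ := Function.ne_iff.mp hw
      intro hz
      have := congrFun (congrFun hz i) j
      rw [hN, Matrix.vecMulVec_apply] at this
      exact (mul_ne_zero hi hj) this
    have hd := pos_spec hN0
    rw [hN, Matrix.vecMulVec_apply] at hd
    have hci : c (pos N).1 ≠ 0 := fun h => hd (by rw [h, zero_mul])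
    have hwj : w (pos N).2 ≠ 0 := fun h => hd (by rw [h, mul_zero])
    refine Subtype.ext (Prod.ext ?_ ?_)
    · funext i
      simp only [Units.val_mk0, Matrix.vecMulVec_apply]
      rw [← hN] at *
      field_simp
    · funext j
      simp only [Units.val_inv_eq_inv_val, Units.val_mk0, Matrix.vecMulVec_apply]
      rw [← hN] at *
      field_simp


set_option maxHeartbeats 4000000 in
set_option maxRecDepth 1000000 in
lemma cardP : Fintype.card {p : VF4 × VF4 //
    p.1 ≠ 0 ∧ p.2 ≠ 0 ∧ dotProduct p.2 p.1 = 0} = 945 := by decide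

lemma card_units_F4 : Nat.card F4ˣ = 3 := by
  rw [Nat.card_eq_fintype_card, Fintype.card_units]
  rfl

lemma cardS : Nat.card {N : MatF4 // N * N = 0 ∧ N ≠ 0} = 315 := by
  have h1 : Nat.card {p : VF4 × VF4 //
      p.1 ≠ 0 ∧ p.2 ≠ 0 ∧ dotProduct p.2 p.1 = 0} = 945 := by
    rw [Nat.card_eq_fintype_card, cardP]
  rw [← Nat.card_congr E2, Nat.card_prod, card_units_F4] at h1
  omega

noncomputable def equivCD : {x : Matrix.SpecialLinearGroup (Fin 3) F4 // orderOf x = 2} ≃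
    {A : MatF4 // A * A = 1 ∧ A ≠ 1} := by
  have : Fact (Nat.Prime 2) := ⟨Nat.prime_two⟩
  have det1 : ∀ A : MatF4, A * A = 1 → A.det = 1 := by
    intro A hA
    have h1 : A.det * A.det = 1 := by rw [← Matrix.det_mul, hA, Matrix.det_one]
    have h2 : ∀ t : F4, t * t = 1 → t = 1 := by decide
    exact h2 _ h1
  refine Equiv.mk
    (fun x => ⟨(x.1 : MatF4), ?_, ?_⟩)
    (fun A => ⟨⟨A.1, det1 A.1 A.2.1⟩, ?_⟩) ?_ ?_
  · have h2 : x.1 ^ 2 = 1 := by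
      have := pow_orderOf_eq_one x.1; rwa [x.2] at this
    have h3 := congrArg Subtype.val h2
    rw [pow_two] at h3
    exact h3
  · intro h
    have h1 : x.1 = 1 := Subtype.ext (by rw [h]; rfl)
    have h2 := x.2
    rw [h1, orderOf_one] at h2
    exact absurd h2 (by norm_num)
  · refine orderOf_eq_prime (Subtype.ext ?_) (fun h => A.2.2 ?_)
    · show ((⟨A.1, det1 A.1 A.2.1⟩ : Matrix.SpecialLinearGroup (Fin 3) F4) ^ 2 : MatF4) =
        ((1 : Matrix.SpecialLinearGroup (Fin 3) F4) : MatF4)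
      rw [pow_two]; exact A.2.1
    · exact congrArg Subtype.val h
  · intro x; ext; rfl
  · intro A; ext; rfl

def equivDN : {A : MatF4 // A * A = 1 ∧ A ≠ 1} ≃
    {N : MatF4 // N * N = 0 ∧ N ≠ 0} := by
  have double : ∀ M : MatF4, M + M = 0 := by
    intro M; ext i j
    show M i j + M i j = 0
    have : ∀ t : F4, t + t = 0 := by decide
    exact this _
  have cancel : ∀ M : MatF4, M + 1 + 1 = M := by
    intro M; rw [add_assoc, double 1, add_zero]
  have key : ∀ A : MatF4, (A + 1) * (A + 1) = A * A + 1 := by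
    intro A
    have h : (A + 1) * (A + 1) = A * A + (A + A) + 1 := by noncomm_ring
    rw [h, double A, add_zero]
  refine Equiv.mk (fun A => ⟨A.1 + 1, ?_, ?_⟩) (fun N => ⟨N.1 + 1, ?_, ?_⟩) ?_ ?_
  · rw [key, A.2.1, double]
  · intro h
    apply A.2.2
    have := congrArg (· + 1) h
    rw [cancel, zero_add] at this
    exact this
  · rw [key, N.2.1, zero_add]
  · intro h
    apply N.2.2
    have := congrArg (· + 1) h
    rw [cancel] at this
    rw [this]
    exact double 1
  · intro A; ext : 1; exact cancel A.1
  · intro N; ext : 1; exact cancel N.1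

abbrev K4 := GaloisField 2 2
noncomputable instance : Fintype K4 := Fintype.ofFinite _

lemma card_K4 : Fintype.card K4 = 4 := by
  rw [← Nat.card_eq_fintype_card, GaloisField.card 2 2 (by norm_num)]; norm_num

noncomputable def ringEquivK4F4 : K4 ≃+* F4 :=
  FiniteField.ringEquivOfCardEq (by rw [card_K4]; rfl)

noncomputable def slEquiv : Matrix.SpecialLinearGroup (Fin 3) K4 ≃*
    Matrix.SpecialLinearGroup (Fin 3) F4 := by
  refine MulEquiv.mk ⟨Matrix.SpecialLinearGroup.map (ringEquivK4F4 : K4 →+* F4),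
    Matrix.SpecialLinearGroup.map (ringEquivK4F4.symm : F4 →+* K4), ?_, ?_⟩ ?_
  · intro A
    ext i j
    exact ringEquivK4F4.symm_apply_apply _
  · intro A
    ext i j
    exact ringEquivK4F4.apply_symm_apply _
  · intro A B
    simp

lemma center_cube (z : Matrix.SpecialLinearGroup (Fin 3) K4)
    (hz : z ∈ Subgroup.center (Matrix.SpecialLinearGroup (Fin 3) K4)) : z ^ 3 = 1 := by
  obtain ⟨r, hr, hrz⟩ := Matrix.SpecialLinearGroup.mem_center_iff.mp hz
  have hcard : Fintype.card (Fin 3) = 3 := by simp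
  rw [hcard] at hr
  ext i j
  have h : ((z ^ 3 : _) : Matrix (Fin 3) (Fin 3) K4) = (z : Matrix (Fin 3) (Fin 3) K4) ^ 3 := by
    simp
  rw [h, ← hrz, ← map_pow, hr, map_one]
  rfl

theorem card_involutions_PSL34 :
    Nat.card {x : PSL34 // orderOf x = 2} = 315 := by
  have step1 : Nat.card {x : PSL34 // orderOf x = 2} =
      Nat.card {x : Matrix.SpecialLinearGroup (Fin 3) K4 // orderOf x = 2} :=
    card_invol_quotient_center center_cube
  have step2 : Nat.card {x : Matrix.SpecialLinearGroup (Fin 3) K4 // orderOf x = 2} =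
      Nat.card {x : Matrix.SpecialLinearGroup (Fin 3) F4 // orderOf x = 2} := by
    refine Nat.card_congr (Equiv.subtypeEquiv slEquiv.toEquiv (fun x => ?_))
    have := orderOf_injective slEquiv.toMonoidHom slEquiv.injective x
    simp only [MulEquiv.coe_toMonoidHom] at this
    rw [show slEquiv.toEquiv x = slEquiv x from rfl, this]
  rw [step1, step2, Nat.card_congr equivCD, Nat.card_congr equivDN, cardS]
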